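/- For 0 < θ < 1, the function g(t) = t - (t - 1/2)^(1-θ) · t^θ is monotonically decreasing on [2, ∞) and lim_{t→∞} g(t) = (1-θ)/2; in particular g(t) ≥ (1-θ)/2 for all t ≥ 2. -/

import Mathlib

open Filter

theorem amgm (θ : ℝ) (hθ0 : 0 < θ) (hθ1 : θ < 1) (u : ℝ) (hu : 0 < u) :
    1 ≤ (1 - θ) * u ^ θ + θ * u ^ (θ - 1) := by
  have h := Real.geom_mean_le_arith_mean2_weighted (by linarith : (0:ℝ) ≤ 1 - θ) hθ0.le
    (Real.rpow_nonneg hu.le θ) (Real.rpow_nonneg hu.le (θ - 1)) (by ring)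
  calc (1:ℝ) = (u ^ θ) ^ (1 - θ) * (u ^ (θ - 1)) ^ θ := by
        rw [← Real.rpow_mul hu.le, ← Real.rpow_mul hu.le, ← Real.rpow_add hu]
        rw [show θ * (1 - θ) + (θ - 1) * θ = 0 by ring, Real.rpow_zero]
    _ ≤ _ := h

theorem dg (θ : ℝ) (x : ℝ) (hx : (1:ℝ)/2 < x) :
    HasDerivAt (fun t : ℝ => t - (t - 1 / 2) ^ (1 - θ) * t ^ θ)
      (1 - ((1 - θ) * (x - 1/2) ^ (-θ) * x ^ θ + θ * ((x - 1/2) ^ (1-θ) * x ^ (θ - 1)))) x := by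
  have hx0 : (0:ℝ) < x := by linarith
  have h1 : HasDerivAt (fun t : ℝ => (t - 1/2) ^ (1 - θ))
      (1 * (1 - θ) * (x - 1/2) ^ (1 - θ - 1)) x := by
    have := ((hasDerivAt_id x).sub_const (1/2:ℝ)).rpow_const (p := 1 - θ)
      (Or.inl (show x - 1/2 ≠ 0 from ne_of_gt (by linarith)))
    simpa using this
  have h2 : HasDerivAt (fun t : ℝ => t ^ θ) (θ * x ^ (θ - 1)) x :=
    Real.hasDerivAt_rpow_const (Or.inl hx0.ne')
  have h3 := (hasDerivAt_id x).sub (h1.mul h2)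
  refine h3.congr_deriv ?_
  rw [show (1:ℝ) - θ - 1 = -θ by ring]
  ring

theorem deriv_nonpos (θ : ℝ) (hθ0 : 0 < θ) (hθ1 : θ < 1) (x : ℝ) (hx : (1:ℝ)/2 < x) :
    1 - ((1 - θ) * (x - 1/2) ^ (-θ) * x ^ θ + θ * ((x - 1/2) ^ (1-θ) * x ^ (θ - 1))) ≤ 0 := by
  have hx0 : (0:ℝ) < x := by linarith
  have hx2 : (0:ℝ) < x - 1/2 := by linarith
  have hu : (0:ℝ) < x / (x - 1/2) := by positivity
  have key := amgm θ hθ0 hθ1 _ hu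
  have e1 : (x / (x - 1/2)) ^ θ = (x - 1/2) ^ (-θ) * x ^ θ := by
    rw [Real.div_rpow hx0.le hx2.le, div_eq_mul_inv, ← Real.rpow_neg hx2.le]
    ring
  have e2 : (x / (x - 1/2)) ^ (θ - 1) = (x - 1/2) ^ (1-θ) * x ^ (θ - 1) := by
    rw [Real.div_rpow hx0.le hx2.le, div_eq_mul_inv, ← Real.rpow_neg hx2.le,
      show -(θ-1) = 1 - θ by ring]
    ring
  rw [e1, e2] at key
  linarith

theorem stmt4 (θ : ℝ) (hθ0 : 0 < θ) (hθ1 : θ < 1) :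
    AntitoneOn (fun t : ℝ => t - (t - 1 / 2) ^ (1 - θ) * t ^ θ) (Set.Ici 2) ∧
      Tendsto (fun t : ℝ => t - (t - 1 / 2) ^ (1 - θ) * t ^ θ) atTop (nhds ((1 - θ) / 2)) ∧
      ∀ t : ℝ, 2 ≤ t → (1 - θ) / 2 ≤ t - (t - 1 / 2) ^ (1 - θ) * t ^ θ := by
  have hanti : AntitoneOn (fun t : ℝ => t - (t - 1 / 2) ^ (1 - θ) * t ^ θ) (Set.Ici 2) := by
    apply antitoneOn_of_deriv_nonpos (convex_Ici 2)
    · exact fun x hx => (dg θ x (by simp at hx; linarith)).continuousAt.continuousWithinAt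
    · rw [interior_Ici]
      exact fun x hx => (dg θ x (by simp at hx; linarith)).differentiableAt.differentiableWithinAt
    · rw [interior_Ici]
      intro x hx
      have hx' : (1:ℝ)/2 < x := by simp at hx; linarith
      rw [(dg θ x hx').deriv]
      exact deriv_nonpos θ hθ0 hθ1 x hx'
  -- Tendsto part
  have hφ : HasDerivAt (fun s : ℝ => 1 - (1 - s) ^ (1 - θ)) (1 - θ) 0 := by
    have hd : HasDerivAt (fun s : ℝ => (1 - s) ^ (1 - θ)) (-(1 - θ)) 0 := by
      have := ((hasDerivAt_id (0:ℝ)).const_sub 1).rpow_const (p := 1 - θ)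
        (Or.inl (by norm_num))
      simpa using this
    simpa using hd.const_sub 1
  have hslope := hasDerivAt_iff_tendsto_slope.mp hφ
  have hcomp : Tendsto (fun t : ℝ => 1 / (2 * t)) atTop (nhdsWithin 0 {(0:ℝ)}ᶜ) := by
    apply tendsto_nhdsWithin_of_tendsto_nhds_of_eventually_within
    · have h2t : Tendsto (fun t : ℝ => 2 * t) atTop atTop :=
        Tendsto.const_mul_atTop two_pos tendsto_id
      have h3 := h2t.inv_tendsto_atTop
      have : (fun t : ℝ => 1 / (2 * t)) = (fun t : ℝ => 2 * t)⁻¹ := by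
        funext t; simp [Pi.inv_apply, one_div]
      rwa [this]
    · filter_upwards [eventually_gt_atTop (0:ℝ)] with t ht
      simp only [Set.mem_compl_iff, Set.mem_singleton_iff]
      positivity
  have T := (hslope.comp hcomp).div_const 2
  have htend : Tendsto (fun t : ℝ => t - (t - 1 / 2) ^ (1 - θ) * t ^ θ) atTop
      (nhds ((1 - θ) / 2)) := by
    apply T.congr'
    filter_upwards [eventually_ge_atTop (1:ℝ)] with t ht
    have ht0 : (0:ℝ) < t := by linarith
    have hs0 : (0:ℝ) < 1 / (2 * t) := by positivity
    have hB : t ^ (1 - θ) * t ^ θ = t := by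
      rw [← Real.rpow_add ht0]; simp
    have hBpos : (0:ℝ) < t ^ (1 - θ) := Real.rpow_pos_of_pos ht0 _
    have hsub : 1 - 1 / (2 * t) = (t - 1/2) / t := by field_simp
    simp only [Function.comp, slope_def_field]
    rw [hsub, Real.div_rpow (by linarith) ht0.le]
    norm_num
    field_simp
    linear_combination ((t * 2 - 1) / 2) ^ (1 - θ) * hB
  refine ⟨hanti, htend, fun t ht => ?_⟩
  apply le_of_tendsto htend
  filter_upwards [eventually_ge_atTop t] with s hs
  exact hanti (by exact ht) (Set.mem_Ici.mpr (le_trans ht hs)) hs
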